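/- Every short exact sequence of topological abelian groups 0 → F → G → ℤ_p^g → 0 with F finite splits; equivalently, any commutative topological group extension G of ℤ_p^g by a finite abelian group F is isomorphic as a topological group to ℤ_p^g × F. -/

import Mathlib

open Set

namespace Stmt2Aux

variable {p : ℕ} [Fact p.Prime] {g : ℕ}

/-- The subgroup `p^n ℤ_p^g` as a set. -/
def Sn (p : ℕ) [Fact p.Prime] (g : ℕ) (n : ℕ) : Set (Fin g → ℤ_[p]) :=
  {z | ∀ j, (p : ℤ_[p]) ^ n ∣ z j}

lemma Sn_zero_mem (n : ℕ) : (0 : Fin g → ℤ_[p]) ∈ Sn p g n := fun j => dvd_zero _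

lemma Sn_add {n : ℕ} {a b : Fin g → ℤ_[p]} (ha : a ∈ Sn p g n) (hb : b ∈ Sn p g n) :
    a + b ∈ Sn p g n := fun j => dvd_add (ha j) (hb j)

lemma Sn_neg {n : ℕ} {a : Fin g → ℤ_[p]} (ha : a ∈ Sn p g n) : -a ∈ Sn p g n :=
  fun j => (dvd_neg).2 (ha j)

lemma Sn_sub {n : ℕ} {a b : Fin g → ℤ_[p]} (ha : a ∈ Sn p g n) (hb : b ∈ Sn p g n) :
    a - b ∈ Sn p g n := by
  rw [sub_eq_add_neg]; exact Sn_add ha (Sn_neg hb)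

lemma mem_Sn_iff_norm {n : ℕ} {x : ℤ_[p]} :
    (p : ℤ_[p]) ^ n ∣ x ↔ ‖x‖ ≤ (p : ℝ) ^ (-(n : ℤ)) := by
  rw [PadicInt.norm_le_pow_iff_mem_span_pow, Ideal.mem_span_singleton]

lemma Sn_isOpen (n : ℕ) : IsOpen (Sn p g n) := by
  have : Sn p g n = ⋂ j : Fin g, {z : Fin g → ℤ_[p] | ‖z j‖ < (p : ℝ) ^ (-(n : ℤ) + 1)} := by
    ext z
    simp only [Sn, mem_setOf_eq, mem_iInter]
    refine forall_congr' fun j => ?_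
    rw [mem_Sn_iff_norm, PadicInt.norm_le_pow_iff_norm_lt_pow_add_one]
  rw [this]
  exact isOpen_iInter_of_finite fun j =>
    ((continuous_apply j).norm).isOpen_preimage _ isOpen_Iio

lemma Sn_eq_range (n : ℕ) :
    Sn p g n = Set.range (fun z : Fin g → ℤ_[p] => (p : ℤ_[p]) ^ n • z) := by
  ext z
  constructor
  · intro hz
    choose w hw using hz
    exact ⟨w, by ext j; simp [Pi.smul_apply, smul_eq_mul, (hw j).symm]⟩
  · rintro ⟨w, rfl⟩ j
    exact ⟨w j, rfl⟩

lemma Sn_isCompact (n : ℕ) : IsCompact (Sn p g n) := by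
  rw [Sn_eq_range]
  have hc : Continuous (fun z : Fin g → ℤ_[p] => (p : ℤ_[p]) ^ n • z) :=
    continuous_pi fun j => by
      exact (continuous_const.mul (continuous_apply j) :
        Continuous fun a : Fin g → ℤ_[p] => (p : ℤ_[p]) ^ n * a j)
  simpa [Set.image_univ] using isCompact_univ.image hc

lemma Sn_anti {k l : ℕ} (h : k ≤ l) : Sn p g l ⊆ Sn p g k :=
  fun _ hz j => dvd_trans (pow_dvd_pow _ h) (hz j)

lemma Sn_basis {U : Set (Fin g → ℤ_[p])} (hU : U ∈ nhds (0 : Fin g → ℤ_[p])) :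
    ∃ n, Sn p g n ⊆ U := by
  have hp1 : (1 : ℝ) < (p : ℝ) := by exact_mod_cast (Fact.out : p.Prime).one_lt
  rcases Metric.mem_nhds_iff.1 hU with ⟨ε, hε, hball⟩
  obtain ⟨n, hn⟩ : ∃ n : ℕ, ((p : ℝ)⁻¹) ^ n < ε := by
    refine exists_pow_lt_of_lt_one hε ?_
    rw [inv_lt_one_iff₀]; right; exact hp1
  refine ⟨n, fun z hz => hball ?_⟩
  rw [Metric.mem_ball, dist_zero_right]
  rcases eq_or_ne g 0 with hg | hg
  · have : z = 0 := funext fun j => absurd j.2 (by omega)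
    simpa [this] using hε
  · haveI : Nonempty (Fin g) := ⟨⟨0, Nat.pos_of_ne_zero hg⟩⟩
    calc ‖z‖ ≤ (p : ℝ) ^ (-(n : ℤ)) := by
          refine (pi_norm_le_iff_of_nonneg (by positivity)).2 fun j => ?_
          exact mem_Sn_iff_norm.1 (hz j)
      _ = ((p : ℝ)⁻¹) ^ n := by
          rw [zpow_neg, zpow_natCast, inv_pow]
      _ < ε := hn

lemma Sn_iInter : (⋂ n, Sn p g n) = {(0 : Fin g → ℤ_[p])} := by
  apply Set.eq_singleton_iff_unique_mem.2
  refine ⟨mem_iInter.2 fun n => Sn_zero_mem n, fun z hz => ?_⟩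
  have hp1 : (1 : ℝ) < (p : ℝ) := by exact_mod_cast (Fact.out : p.Prime).one_lt
  ext j
  simp only [Pi.zero_apply]
  have hj : ∀ n : ℕ, ‖z j‖ ≤ ((p : ℝ)⁻¹) ^ n := by
    intro n
    have := mem_Sn_iff_norm.1 ((mem_iInter.1 hz n) j)
    rwa [zpow_neg, zpow_natCast, ← inv_pow] at this
  by_contra hne
  have hpos : 0 < ‖z j‖ := norm_pos_iff.2 hne
  obtain ⟨n, hn⟩ := exists_pow_lt_of_lt_one hpos (by rw [inv_lt_one_iff₀]; right; exact hp1)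
  exact absurd (hj n) (not_le.2 hn)

end Stmt2Aux

namespace Stmt2Aux

variable {p : ℕ} [Fact p.Prime] {g : ℕ}

lemma eq_of_forall_mem_Sn {x y : Fin g → ℤ_[p]} (h : ∀ n, x - y ∈ Sn p g n) : x = y := by
  have : x - y ∈ ⋂ n, Sn p g n := mem_iInter.2 h
  rw [Sn_iInter, mem_singleton_iff, sub_eq_zero] at this
  exact this

lemma isUnit_natCast_of_not_dvd {e : ℕ} (he : ¬ p ∣ e) : IsUnit (e : ℤ_[p]) := by
  by_contra h
  apply he
  have hmem : (e : ℤ_[p]) ∈ IsLocalRing.maximalIdeal ℤ_[p] :=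
    (IsLocalRing.mem_maximalIdeal _).2 (mem_nonunits_iff.2 h)
  rw [PadicInt.maximalIdeal_eq_span_p, Ideal.mem_span_singleton] at hmem
  have : (p : ℤ_[p]) ^ 1 ∣ ((e : ℤ) : ℤ_[p]) := by
    rw [pow_one]; exact_mod_cast hmem
  rw [PadicInt.pow_p_dvd_int_iff] at this
  exact_mod_cast (by simpa using this : (p : ℤ) ∣ (e : ℤ))

lemma int_dvd_of_span {k : ℕ} {d : ℤ} (h : ((d : ℤ_[p])) ∈ Ideal.span {(p : ℤ_[p]) ^ k}) :
    (p : ℤ) ^ k ∣ d := by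
  rw [Ideal.mem_span_singleton, PadicInt.pow_p_dvd_int_iff] at h
  exact_mod_cast h

lemma span_anti {k l : ℕ} (hkl : k ≤ l) :
    (Ideal.span {(p : ℤ_[p]) ^ l} : Ideal ℤ_[p]) ≤ Ideal.span {(p : ℤ_[p]) ^ k} := by
  apply Ideal.span_le.2
  rw [Set.singleton_subset_iff]
  rw [SetLike.mem_coe, Ideal.mem_span_singleton]
  exact pow_dvd_pow _ hkl

/-- difference of two `appr`-approximations at levels `≥ k` is divisible by `p^k`. -/
lemma appr_sub_appr_dvd {a b : ℤ_[p]} {k l l' : ℕ} (hl : k ≤ l) (hl' : k ≤ l')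
    (hab : a - b ∈ Ideal.span {(p : ℤ_[p]) ^ k}) :
    (p : ℤ) ^ k ∣ ((a.appr l : ℤ) - (b.appr l' : ℤ)) := by
  apply int_dvd_of_span
  have h1 : a - (a.appr l : ℤ_[p]) ∈ Ideal.span {(p : ℤ_[p]) ^ k} :=
    span_anti hl (PadicInt.appr_spec l a)
  have h2 : b - (b.appr l' : ℤ_[p]) ∈ Ideal.span {(p : ℤ_[p]) ^ k} :=
    span_anti hl' (PadicInt.appr_spec l' b)
  have h3 : a - (b.appr l' : ℤ_[p]) ∈ Ideal.span {(p : ℤ_[p]) ^ k} := by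
    have := Ideal.add_mem _ hab h2
    rwa [sub_add_sub_cancel] at this
  have : ((a.appr l : ℤ_[p]) - (b.appr l' : ℤ_[p])) ∈ Ideal.span {(p : ℤ_[p]) ^ k} := by
    have := Ideal.sub_mem _ h3 h1
    rwa [sub_sub_sub_cancel_left] at this
  push_cast
  exact this

end Stmt2Aux

open Stmt2Aux Set Pointwise

/-- Every short exact sequence of topological abelian groups `0 → F → G → ℤ_p^g → 0` with `F`
finite (discrete) splits: if `i : F → G` is a continuous injective homomorphism which is a
topological embedding, `π : G → ℤ_p^g` is a continuous open surjective homomorphism, and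
`ker π = im i`, then `G` is isomorphic as a topological group to `ℤ_p^g × F`. -/
theorem stmt_2 (p : ℕ) [Fact p.Prime] (g : ℕ) (hg : 1 ≤ g)
    {F G : Type*} [AddCommGroup F] [TopologicalSpace F] [DiscreteTopology F] [Finite F]
    [AddCommGroup G] [TopologicalSpace G] [IsTopologicalAddGroup G]
    (i : F →+ G) (hi_inj : Function.Injective i) (hi_cont : Continuous i)
    (hi_emb : Topology.IsEmbedding (i : F → G))
    (π : G →+ (Fin g → ℤ_[p])) (hπ_cont : Continuous π) (hπ_surj : Function.Surjective π)
    (hπ_open : IsOpenMap π)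
    (hexact : π.ker = i.range) :
    ∃ e : G ≃ₜ ((Fin g → ℤ_[p]) × F), ∀ x y : G, e (x + y) = e x + e y := by
  classical
  -- the kernel as a set
  set T : Set G := Set.range i with hTdef
  have hT0 : (0 : G) ∈ T := ⟨0, map_zero i⟩
  have hTsub : ∀ {a b : G}, a ∈ T → b ∈ T → a - b ∈ T := by
    rintro a b ⟨fa, rfl⟩ ⟨fb, rfl⟩
    exact ⟨fa - fb, map_sub i fa fb⟩
  have hTneg : ∀ {a : G}, a ∈ T → -a ∈ T := by
    intro a ha
    simpa using hTsub hT0 ha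
  have hTadd : ∀ {a b : G}, a ∈ T → b ∈ T → a + b ∈ T := by
    intro a b ha hb
    simpa [sub_neg_eq_add] using hTsub ha (hTneg hb)
  have hTfin : T.Finite := Set.finite_range i
  have hker : ∀ x : G, π x = 0 ↔ x ∈ T := by
    intro x
    rw [← AddMonoidHom.mem_ker, hexact]
    exact Iff.rfl
  -- a neighborhood of 0 meeting T trivially
  obtain ⟨V, hVopen, hV⟩ := hi_emb.toIsInducing.isOpen_iff.1 (isOpen_discrete ({0} : Set F))
  have hV0 : (0 : G) ∈ V := by
    have h0 : (0 : F) ∈ i ⁻¹' V := by rw [hV]; rfl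
    simpa [map_zero] using h0
  have hVT : ∀ x ∈ V, x ∈ T → x = 0 := by
    rintro x hxV ⟨f, rfl⟩
    have : f ∈ i ⁻¹' V := hxV
    rw [hV, mem_singleton_iff] at this
    rw [this, map_zero]
  -- a smaller neighborhood with differences in V
  obtain ⟨V₁', hV₁mem, hV₁sub⟩ := exists_nhds_half_neg (hVopen.mem_nhds hV0)
  obtain ⟨V₁, hV₁ss, hV₁open, hV₁0⟩ := mem_nhds_iff.1 hV₁mem
  have hπinj : Set.InjOn π V₁ := by
    intro a ha b hb hab
    have : a - b ∈ T := (hker _).1 (by rw [map_sub, hab, sub_self])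
    have := hVT _ (hV₁sub a (hV₁ss ha) b (hV₁ss hb)) this
    exact sub_eq_zero.1 this
  -- Sn n₀ inside π '' V₁
  obtain ⟨n₀, hn₀⟩ : ∃ n, Sn p g n ⊆ π '' V₁ := by
    apply Sn_basis
    exact (hπ_open _ hV₁open).mem_nhds ⟨0, hV₁0, map_zero π⟩
  -- the compact local slice K
  have hfr_open : IsOpenMap (V₁.restrict π) := hπ_open.restrict hV₁open
  have hfr_cont : Continuous (V₁.restrict π) := hπ_cont.comp continuous_subtype_val
  have hfr_inj : Function.Injective (V₁.restrict π) := fun a b hab =>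
    Subtype.ext (hπinj a.2 b.2 hab)
  have hfr_emb : Topology.IsOpenEmbedding (V₁.restrict π) :=
    .of_continuous_injective_isOpenMap hfr_cont hfr_inj hfr_open
  have hrange : Set.range (V₁.restrict π) = π '' V₁ := Set.range_restrict π V₁
  have hsK_cpt : IsCompact ((V₁.restrict π) ⁻¹' (Sn p g n₀)) := by
    rw [hfr_emb.toIsEmbedding.isCompact_iff]
    rw [Set.image_preimage_eq_of_subset (by rw [hrange]; exact hn₀)]
    exact Sn_isCompact n₀
  set K : Set G := Subtype.val '' ((V₁.restrict π) ⁻¹' (Sn p g n₀)) with hKdef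
  have hK_cpt : IsCompact K := hsK_cpt.image continuous_subtype_val
  have hπK : ∀ w ∈ Sn p g n₀, ∃ x ∈ K, π x = w := by
    intro w hw
    obtain ⟨v, hv, hvw⟩ := hn₀ hw
    refine ⟨v, ⟨⟨v, hv⟩, ?_, rfl⟩, hvw⟩
    show π v ∈ Sn p g n₀
    rwa [hvw]
  -- G is Hausdorff
  have hclosed0 : IsClosed ({0} : Set G) := by
    apply isClosed_of_closure_subset
    intro x hx
    have hπx : π x ∈ closure (π '' {0}) := image_closure_subset_closure_image hπ_cont ⟨x, hx, rfl⟩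
    rw [Set.image_singleton, map_zero, closure_singleton, mem_singleton_iff] at hπx
    have hxT : x ∈ T := (hker x).1 hπx
    have hmem : (0 : G) ∈ (· + x) '' V := by
      rcases mem_closure_iff.1 hx ((· + x) '' V)
        ((isOpenMap_add_right x) V hVopen) ⟨0, hV0, by simp⟩ with ⟨y, hy1, hy2⟩
      rw [mem_singleton_iff] at hy2
      rwa [hy2] at hy1
    obtain ⟨v, hv, hv0⟩ := hmem
    have hvx : v = -x := by
      have h' : v + x = 0 := hv0
      rw [← neg_eq_of_add_eq_zero_left h']
    rw [hvx] at hv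
    have : -x = 0 := hVT _ hv (hTneg hxT)
    rw [mem_singleton_iff]
    simpa using congrArg Neg.neg this
  haveI hT2 : T2Space G := IsTopologicalAddGroup.t2Space_iff_zero_closed.2 hclosed0
  -- G is compact
  choose lift hlift using hπ_surj
  obtain ⟨C, hC⟩ : ∃ C : Finset (Fin g → ℤ_[p]),
      ∀ w : Fin g → ℤ_[p], ∃ z ∈ C, w - z ∈ Sn p g n₀ := by
    obtain ⟨C, hC⟩ := isCompact_univ.elim_finite_subcover
      (fun z : Fin g → ℤ_[p] => {w | w - z ∈ Sn p g n₀})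
      (fun z => (Sn_isOpen n₀).preimage (continuous_sub_right z))
      (fun w _ => mem_iUnion.2 ⟨w, by simp [Sn_zero_mem]⟩)
    refine ⟨C, fun w => ?_⟩
    have := hC (mem_univ w)
    simpa using this
  haveI hGcs : CompactSpace G := by
    refine ⟨?_⟩
    have hcover : (Set.univ : Set G) ⊆ ⋃ z ∈ C, (lift z + ·) '' (K + T) := by
      intro y _
      obtain ⟨z, hzC, hz⟩ := hC (π y)
      obtain ⟨k, hk, hπk⟩ := hπK _ hz
      have ht : y - lift z - k ∈ T := by
        apply (hker _).1
        rw [map_sub, map_sub, hπk, hlift]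
        abel
      have hyl : y - lift z ∈ K + T := by
        have heq : y - lift z = k + (y - lift z - k) := by abel
        rw [heq]; exact Set.add_mem_add hk ht
      exact mem_iUnion₂.2 ⟨z, hzC, ⟨y - lift z, hyl, add_sub_cancel (lift z) y⟩⟩
    refine IsCompact.of_isClosed_subset ?_ isClosed_univ hcover
    exact Set.Finite.isCompact_biUnion (C.finite_toSet) fun z _ =>
      ((hK_cpt.add hTfin.isCompact).image (continuous_add_left (lift z)))
  -- the order of T
  set m : ℕ := Nat.card F with hmdef
  have hm0 : m ≠ 0 := Nat.card_pos.ne'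
  have hmT : ∀ t ∈ T, m • t = 0 := by
    rintro t ⟨f, rfl⟩
    rw [← map_nsmul, card_nsmul_eq_zero', map_zero]
  set α : ℕ := m.factorization p with hαdef
  set e : ℕ := m / p ^ α with hedef
  have hpe : ¬ p ∣ e := Nat.not_dvd_ordCompl Fact.out hm0
  have he0 : e ≠ 0 := (Nat.ordCompl_pos p hm0).ne'
  have hαe : p ^ α * e = m := Nat.ordProj_mul_ordCompl_eq_self m p
  -- the subgroups e^k • G and their intersection G₁
  set Gk : ℕ → Set G := fun k => {x : G | ∃ y : G, e ^ k • y = x} with hGkdef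
  have hGk_range : ∀ k, Gk k = Set.range (fun y : G => e ^ k • y) := fun k => rfl
  have hGk_cpt : ∀ k, IsCompact (Gk k) := fun k => by
    rw [hGk_range, ← Set.image_univ]
    exact isCompact_univ.image (continuous_nsmul (e ^ k) : Continuous _)
  have hGk_anti : ∀ {k l : ℕ}, k ≤ l → Gk l ⊆ Gk k := by
    intro k l hkl
    rintro x ⟨y, rfl⟩
    refine ⟨e ^ (l - k) • y, ?_⟩
    show e ^ k • (e ^ (l - k) • y) = e ^ l • y
    rw [← mul_nsmul', ← pow_add, Nat.add_sub_cancel' hkl]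
  set G₁ : Set G := ⋂ k, Gk k with hG₁def
  have hG₁_closed : IsClosed G₁ := isClosed_iInter fun k => (hGk_cpt k).isClosed
  have hG₁_cpt : IsCompact G₁ := hG₁_closed.isCompact
  have hG₁0 : (0 : G) ∈ G₁ := mem_iInter.2 fun k => ⟨0, smul_zero _⟩
  have hG₁sub : ∀ {a b : G}, a ∈ G₁ → b ∈ G₁ → a - b ∈ G₁ := by
    intro a b ha hb
    refine mem_iInter.2 fun k => ?_
    obtain ⟨x, hx⟩ := mem_iInter.1 ha k
    obtain ⟨y, hy⟩ := mem_iInter.1 hb k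
    exact ⟨x - y, by show e ^ k • (x - y) = a - b; rw [smul_sub, hx, hy]⟩
  have hG₁add : ∀ {a b : G}, a ∈ G₁ → b ∈ G₁ → a + b ∈ G₁ := by
    intro a b ha hb
    have := hG₁sub ha (hG₁sub hG₁0 hb)
    simpa using this
  have hG₁zsmul : ∀ (n : ℤ) {a : G}, a ∈ G₁ → n • a ∈ G₁ := by
    intro n a ha
    refine mem_iInter.2 fun k => ?_
    obtain ⟨x, hx⟩ := mem_iInter.1 ha k
    refine ⟨n • x, ?_⟩
    show e ^ k • (n • x) = n • a
    rw [← hx, ← natCast_zsmul x (e ^ k), ← natCast_zsmul (n • x), smul_comm]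
  have hG₁nsmul : ∀ (n : ℕ) {a : G}, a ∈ G₁ → n • a ∈ G₁ := by
    intro n a ha
    have := hG₁zsmul (n : ℤ) ha
    rwa [natCast_zsmul] at this
  -- G = G₁ + T : every fiber of π meets G₁
  have hG₁T : ∀ x : G, ∃ y ∈ G₁, π y = π x := by
    intro x
    have hQne : ∀ k : ℕ, (Gk k ∩ π ⁻¹' {π x}).Nonempty := by
      intro k
      obtain ⟨u, hu⟩ := (isUnit_natCast_of_not_dvd (p := p) hpe).pow k
      refine ⟨e ^ k • lift (fun j => (↑u⁻¹ : ℤ_[p]) * π x j), ⟨_, rfl⟩, ?_⟩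
      simp only [mem_preimage, mem_singleton_iff]
      rw [map_nsmul, hlift]
      ext j
      simp only [Pi.smul_apply, smul_eq_mul, nsmul_eq_mul]
      push_cast
      rw [← hu, Units.mul_inv_cancel_left]
    obtain ⟨y, hy⟩ := IsCompact.nonempty_iInter_of_sequence_nonempty_isCompact_isClosed
      (fun k => Gk k ∩ π ⁻¹' {π x})
      (fun k => inter_subset_inter_left _ (hGk_anti (Nat.le_succ k)))
      hQne
      ((hGk_cpt 0).inter_right (isClosed_singleton.preimage hπ_cont))
      (fun k => (hGk_cpt k).isClosed.inter (isClosed_singleton.preimage hπ_cont))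
    rw [mem_iInter] at hy
    refine ⟨y, mem_iInter.2 fun k => (hy k).1, ?_⟩
    have := (hy 0).2
    simpa using this
  have hG₁π : ∀ w : Fin g → ℤ_[p], ∃ y ∈ G₁, π y = w := by
    intro w
    obtain ⟨y, hy, hyw⟩ := hG₁T (lift w)
    exact ⟨y, hy, by rw [hyw, hlift]⟩
  -- elements of G₁ ∩ T are killed by p ^ α
  have hG₁Tp : ∀ t : G, t ∈ G₁ → t ∈ T → p ^ α • t = 0 := by
    intro t ht htT
    obtain ⟨y, hy⟩ := mem_iInter.1 ht 1
    have hu : IsUnit ((e : ℤ_[p])) := isUnit_natCast_of_not_dvd hpe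
    have hπy : π y = 0 := by
      have hπt : π t = 0 := (hker t).2 htT
      rw [← hy, map_nsmul, pow_one] at hπt
      ext j
      have hj := congrFun hπt j
      simp only [Pi.smul_apply, nsmul_eq_mul, Pi.zero_apply] at hj ⊢
      exact (hu.mul_right_eq_zero).1 hj
    have hyT : y ∈ T := (hker y).1 hπy
    rw [← hy, ← mul_nsmul', pow_one, hαe]
    exact hmT y hyT
  -- the sets p^k • G₁
  set Pk : ℕ → Set G := fun k => {x : G | ∃ y ∈ G₁, p ^ k • y = x} with hPkdef
  have hPk_cpt : ∀ k, IsCompact (Pk k) := by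
    intro k
    have himg : Pk k = (fun y : G => p ^ k • y) '' G₁ := rfl
    rw [himg]
    exact hG₁_cpt.image (continuous_nsmul (p ^ k) : Continuous _)
  have hPk_closed : ∀ k, IsClosed (Pk k) := fun k => (hPk_cpt k).isClosed
  have hPk_subG₁ : ∀ k, Pk k ⊆ G₁ := by
    rintro k x ⟨y, hy, rfl⟩
    exact hG₁nsmul _ hy
  have hPk0 : ∀ k, (0 : G) ∈ Pk k := fun k => ⟨0, hG₁0, smul_zero _⟩
  have hPk_anti : ∀ {k l : ℕ}, k ≤ l → Pk l ⊆ Pk k := by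
    intro k l hkl
    rintro x ⟨y, hy, rfl⟩
    exact ⟨p ^ (l - k) • y, hG₁nsmul _ hy, by
      rw [← mul_nsmul', ← pow_add, Nat.add_sub_cancel' hkl]⟩
  have hPk_sub : ∀ {k : ℕ} {a b : G}, a ∈ Pk k → b ∈ Pk k → a - b ∈ Pk k := by
    rintro k a b ⟨x, hx, rfl⟩ ⟨y, hy, rfl⟩
    exact ⟨x - y, hG₁sub hx hy, by rw [smul_sub]⟩
  have hPk_add : ∀ {k : ℕ} {a b : G}, a ∈ Pk k → b ∈ Pk k → a + b ∈ Pk k := by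
    rintro k a b ⟨x, hx, rfl⟩ ⟨y, hy, rfl⟩
    exact ⟨x + y, hG₁add hx hy, by rw [smul_add]⟩
  -- divisible integers land in Pk
  have hdvd_Pk : ∀ (k : ℕ) (d : ℤ) {x : G}, x ∈ G₁ → (p : ℤ) ^ k ∣ d → d • x ∈ Pk k := by
    rintro k d x hx ⟨c, rfl⟩
    refine ⟨c • x, hG₁zsmul c hx, ?_⟩
    rw [← natCast_zsmul (c • x), ← mul_zsmul]
    push_cast
    ring_nf
  -- π sends Pk into Sn
  have hπPk : ∀ (k : ℕ) {x : G}, x ∈ Pk k → π x ∈ Sn p g k := by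
    rintro k x ⟨y, hy, rfl⟩ j
    rw [map_nsmul]
    exact ⟨π y j, by simp [nsmul_eq_mul]⟩
  -- trivial intersection
  have hPk_inter : ∀ x : G, (∀ k, x ∈ Pk k) → x = 0 := by
    intro x hx
    have hπx : π x = 0 := by
      have : ∀ n, π x - 0 ∈ Sn p g n := by
        intro n
        rw [sub_zero]
        exact hπPk n (hx n)
      exact eq_of_forall_mem_Sn this
    obtain ⟨y, hy, hyx⟩ := hx α
    have hπy : π y = 0 := by
      have h0 : p ^ α • π y = 0 := by rw [← map_nsmul, hyx, hπx]
      ext j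
      have hj := congrFun h0 j
      simp only [Pi.smul_apply, nsmul_eq_mul, Pi.zero_apply] at hj ⊢
      have hp0 : ((p : ℤ_[p]) ^ α) ≠ 0 := pow_ne_zero _ (by
        exact_mod_cast Nat.cast_ne_zero.2 (Fact.out : p.Prime).ne_zero)
      push_cast at hj
      exact (mul_eq_zero.1 hj).resolve_left hp0
    rw [← hyx]
    exact hG₁Tp y hy ((hker y).1 hπy)
  -- Pk is a neighbourhood basis of 0
  have hPk_basis : ∀ W ∈ nhds (0 : G), ∃ k, Pk k ⊆ W := by
    intro W hW
    refine exists_subset_nhds_of_isCompact'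
      (fun k l => ⟨max k l, hPk_anti (le_max_left _ _), hPk_anti (le_max_right _ _)⟩)
      hPk_cpt hPk_closed ?_
    intro x hxmem
    have : x = 0 := hPk_inter x (mem_iInter.1 hxmem)
    rwa [this]
  -- existence of p-adic scalar multiples inside G₁
  have hRep_ex : ∀ (a : ℤ_[p]) {x : G}, x ∈ G₁ →
      ∃ y : G, y ∈ G₁ ∧ ∀ k, y - ((a.appr k : ℤ)) • x ∈ Pk k := by
    intro a x hx
    set Q : ℕ → Set G := fun k => {w : G | w - ((a.appr k : ℤ)) • x ∈ Pk k} with hQdef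
    have hQmem : ∀ k w, w ∈ Q k ↔ w - ((a.appr k : ℤ)) • x ∈ Pk k := fun k w => Iff.rfl
    have hQne : ∀ k, (Q k).Nonempty := fun k =>
      ⟨((a.appr k : ℤ)) • x, by rw [hQmem, sub_self]; exact hPk0 k⟩
    have hQcl : ∀ k, IsClosed (Q k) := fun k =>
      (hPk_closed k).preimage (continuous_sub_right _)
    have hQcpt : ∀ k, IsCompact (Q k) := by
      intro k
      have himg : Q k = (fun u : G => u + ((a.appr k : ℤ)) • x) '' Pk k := by
        ext w
        constructor
        · intro hw
          exact ⟨w - ((a.appr k : ℤ)) • x, hw, sub_add_cancel _ _⟩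
        · rintro ⟨u, hu, rfl⟩
          rw [hQmem, add_sub_cancel_right]
          exact hu
      rw [himg]
      exact (hPk_cpt k).image (continuous_add_right _)
    have hQdec : ∀ k, Q (k + 1) ⊆ Q k := by
      intro k w hw
      rw [hQmem] at hw ⊢
      have hdvd : (p : ℤ) ^ k ∣ ((a.appr (k + 1) : ℤ) - (a.appr k : ℤ)) :=
        appr_sub_appr_dvd (Nat.le_succ k) le_rfl (by simpa using Ideal.zero_mem _)
      have h2 : ((a.appr (k + 1) : ℤ) - (a.appr k : ℤ)) • x ∈ Pk k := hdvd_Pk k _ hx hdvd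
      have heq : w - ((a.appr k : ℤ)) • x
          = (w - ((a.appr (k + 1) : ℤ)) • x) + ((a.appr (k + 1) : ℤ) - (a.appr k : ℤ)) • x := by
        rw [sub_smul]; abel
      rw [heq]
      exact hPk_add (hPk_anti (Nat.le_succ k) hw) h2
    obtain ⟨y, hy⟩ := IsCompact.nonempty_iInter_of_sequence_nonempty_isCompact_isClosed
      Q hQdec hQne (hQcpt 0) hQcl
    rw [mem_iInter] at hy
    refine ⟨y, ?_, fun k => (hQmem _ _).1 (hy k)⟩
    have h0 : y - ((a.appr 0 : ℤ)) • x ∈ Pk 0 := (hQmem _ _).1 (hy 0)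
    have : y = (y - ((a.appr 0 : ℤ)) • x) + ((a.appr 0 : ℤ)) • x := by abel
    rw [this]
    exact hG₁add (hPk_subG₁ 0 h0) (hG₁zsmul _ hx)
  -- congruence property of representatives
  have hRep_congr : ∀ (a : ℤ_[p]) {x y : G}, x ∈ G₁ →
      (∀ k, y - ((a.appr k : ℤ)) • x ∈ Pk k) →
      ∀ (k : ℕ) (d : ℤ), a - (d : ℤ_[p]) ∈ Ideal.span {(p : ℤ_[p]) ^ k} →
      y - d • x ∈ Pk k := by
    intro a x y hx hy k d hd
    have h1 : (p : ℤ) ^ k ∣ ((a.appr k : ℤ) - d) := by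
      apply int_dvd_of_span
      have h2 := PadicInt.appr_spec k a
      have h3 := Ideal.sub_mem _ hd h2
      rw [sub_sub_sub_cancel_left] at h3
      push_cast
      exact h3
    have h3 := hdvd_Pk k _ hx h1
    have heq : y - d • x = (y - ((a.appr k : ℤ)) • x) + ((a.appr k : ℤ) - d) • x := by
      rw [sub_smul]; abel
    rw [heq]
    exact hPk_add (hy k) h3
  -- lifts of the standard basis vectors
  choose yb hybG₁ hybπ using fun j : Fin g => hG₁π (Pi.single j (1 : ℤ_[p]))
  choose sfun hsfunG₁ hsfun using fun (j : Fin g) (a : ℤ_[p]) => hRep_ex a (hybG₁ j)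
  -- value of π on sfun
  have hπs : ∀ (j : Fin g) (a : ℤ_[p]), π (sfun j a) = Pi.single j a := by
    intro j a
    apply eq_of_forall_mem_Sn
    intro n
    have h1 : π (sfun j a) - ((a.appr n : ℤ)) • π (yb j) ∈ Sn p g n := by
      rw [← map_zsmul, ← map_sub]
      exact hπPk n (hsfun j a n)
    have h2 : ((a.appr n : ℤ)) • π (yb j) - Pi.single j a ∈ Sn p g n := by
      intro j'
      rw [hybπ]
      simp only [Pi.sub_apply, Pi.smul_apply]
      rcases eq_or_ne j' j with rfl | hne
      · rw [Pi.single_eq_same, Pi.single_eq_same, zsmul_eq_mul, mul_one]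
        have h3 := PadicInt.appr_spec n a
        rw [Ideal.mem_span_singleton] at h3
        have := (dvd_neg).2 h3
        simpa using this
      · rw [Pi.single_eq_of_ne hne, Pi.single_eq_of_ne hne]
        simp
    have heq : π (sfun j a) - Pi.single j a
        = (π (sfun j a) - ((a.appr n : ℤ)) • π (yb j))
          + (((a.appr n : ℤ)) • π (yb j) - Pi.single j a) := by abel
    rw [heq]
    exact Sn_add h1 h2
  -- additivity of sfun
  have hs_add : ∀ (j : Fin g) (a b : ℤ_[p]), sfun j (a + b) = sfun j a + sfun j b := by
    intro j a b
    have key : ∀ k, sfun j (a + b) - (sfun j a + sfun j b) ∈ Pk k := by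
      intro k
      have h1 : sfun j (a + b) - ((a.appr k : ℤ) + (b.appr k : ℤ)) • yb j ∈ Pk k := by
        refine hRep_congr (a + b) (hybG₁ j) (hsfun j (a + b)) k _ ?_
        have h2 := PadicInt.appr_spec k a
        have h3 := PadicInt.appr_spec k b
        have h4 := Ideal.add_mem _ h2 h3
        have heq : a - ↑(a.appr k) + (b - ↑(b.appr k))
            = a + b - ((((a.appr k : ℤ) + (b.appr k : ℤ) : ℤ) : ℤ_[p])) := by push_cast; ring
        rwa [heq] at h4
      have h5 := hPk_sub (hPk_sub h1 (hsfun j a k)) (hsfun j b k)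
      have heq2 : sfun j (a + b) - ((a.appr k : ℤ) + (b.appr k : ℤ)) • yb j
            - (sfun j a - ((a.appr k : ℤ)) • yb j) - (sfun j b - ((b.appr k : ℤ)) • yb j)
          = sfun j (a + b) - (sfun j a + sfun j b) := by
        rw [add_smul]; abel
      rwa [heq2] at h5
    have := hPk_inter _ key
    rwa [sub_eq_zero] at this
  -- uniform continuity of sfun
  have hs_unif : ∀ (j : Fin g) (a b : ℤ_[p]) (k : ℕ),
      a - b ∈ Ideal.span {(p : ℤ_[p]) ^ k} → sfun j a - sfun j b ∈ Pk k := by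
    intro j a b k hab
    have h1 : (p : ℤ) ^ k ∣ ((a.appr k : ℤ) - (b.appr k : ℤ)) :=
      appr_sub_appr_dvd le_rfl le_rfl hab
    have h2 : ((a.appr k : ℤ) - (b.appr k : ℤ)) • yb j ∈ Pk k := hdvd_Pk k _ (hybG₁ j) h1
    have h3 := hPk_add (hPk_sub (hsfun j a k) (hsfun j b k)) h2
    have heq : sfun j a - ((a.appr k : ℤ)) • yb j - (sfun j b - ((b.appr k : ℤ)) • yb j)
          + ((a.appr k : ℤ) - (b.appr k : ℤ)) • yb j
        = sfun j a - sfun j b := by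
      rw [sub_smul]; abel
    rwa [heq] at h3
  -- continuity of sfun
  have hs_cont : ∀ j : Fin g, Continuous (sfun j) := by
    intro j
    rw [continuous_iff_continuousAt]
    intro a
    intro U hU
    have hW : (fun w : G => sfun j a + w) ⁻¹' U ∈ nhds (0 : G) := by
      have hc : ContinuousAt (fun w : G => sfun j a + w) 0 := (continuous_add_left _).continuousAt
      have h0 : (fun w : G => sfun j a + w) 0 = sfun j a := add_zero _
      apply hc
      rw [h0]
      exact hU
    obtain ⟨k, hk⟩ := hPk_basis _ hW
    have hball : Metric.closedBall a ((p : ℝ) ^ (-(k : ℤ))) ∈ nhds a := by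
      apply Metric.closedBall_mem_nhds
      have hp0 : (0 : ℝ) < (p : ℝ) := by exact_mod_cast (Fact.out : p.Prime).pos
      exact zpow_pos hp0 _
    refine Filter.mem_of_superset (Filter.mem_map.2 ?_) subset_rfl
    refine Filter.mem_of_superset hball ?_
    intro b hb
    have hspan : b - a ∈ Ideal.span {(p : ℤ_[p]) ^ k} := by
      rw [← PadicInt.norm_le_pow_iff_mem_span_pow]
      rw [Metric.mem_closedBall] at hb
      rwa [dist_eq_norm] at hb
    have hmem : sfun j b - sfun j a ∈ Pk k := hs_unif j b a k hspan
    have : sfun j b = sfun j a + (sfun j b - sfun j a) := by abel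
    show sfun j b ∈ U
    rw [this]
    exact hk hmem
  -- the splitting map s
  set s : (Fin g → ℤ_[p]) → G := fun z => ∑ j : Fin g, sfun j (z j) with hsdef
  have hπs' : ∀ z, π (s z) = z := by
    intro z
    rw [hsdef]
    simp only [map_sum]
    rw [Finset.sum_congr rfl (fun j _ => hπs j (z j))]
    exact Finset.univ_sum_single z
  have hs_addv : ∀ z w, s (z + w) = s z + s w := by
    intro z w
    rw [hsdef]
    simp only [Pi.add_apply]
    rw [← Finset.sum_add_distrib]
    exact Finset.sum_congr rfl fun j _ => hs_add j (z j) (w j)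
  have hs_cont' : Continuous s := by
    apply continuous_finset_sum
    intro j _
    exact (hs_cont j).comp (continuous_apply j)
  -- the equivalence
  set Φ : (Fin g → ℤ_[p]) × F → G := fun q => s q.1 + i q.2 with hΦdef
  have hΦcont : Continuous Φ := (hs_cont'.comp continuous_fst).add (hi_cont.comp continuous_snd)
  have hπiF : ∀ f : F, π (i f) = 0 := fun f => (hker _).2 ⟨f, rfl⟩
  have hΦadd : ∀ q q' : (Fin g → ℤ_[p]) × F, Φ (q + q') = Φ q + Φ q' := by
    rintro ⟨z, f⟩ ⟨z', f'⟩
    simp only [hΦdef, Prod.fst_add, Prod.snd_add, map_add]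
    rw [hs_addv]
    abel
  have hΦinj : Function.Injective Φ := by
    rintro ⟨z, f⟩ ⟨z', f'⟩ h
    simp only [hΦdef] at h
    have hz : z = z' := by
      have h2 := congrArg π h
      rw [map_add, map_add, hπs', hπs', hπiF, hπiF, add_zero, add_zero] at h2
      exact h2
    subst hz
    exact Prod.ext rfl (hi_inj (add_left_cancel h))
  have hΦsurj : Function.Surjective Φ := by
    intro x
    have hxT : x - s (π x) ∈ T := by
      apply (hker _).1
      rw [map_sub, hπs', sub_self]
    obtain ⟨f, hf⟩ := hxT
    refine ⟨(π x, f), ?_⟩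
    simp only [hΦdef]
    rw [hf]
    abel
  set E : ((Fin g → ℤ_[p]) × F) ≃ G := Equiv.ofBijective Φ ⟨hΦinj, hΦsurj⟩ with hEdef
  have hEcont : Continuous E := hΦcont
  set H : ((Fin g → ℤ_[p]) × F) ≃ₜ G := hEcont.homeoOfEquivCompactToT2 with hHdef
  refine ⟨H.symm, ?_⟩
  intro x y
  apply H.toEquiv.injective
  have happ : ∀ w : G, H.toEquiv (H.symm w) = w := fun w => H.apply_symm_apply w
  have hEΦ : ∀ q, H.toEquiv q = Φ q := fun q => rfl
  rw [happ, hEΦ, ← hEΦ (H.symm x + H.symm y)]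
  show x + y = H.toEquiv (H.symm x + H.symm y)
  have : H.toEquiv (H.symm x + H.symm y) = Φ (H.symm x) + Φ (H.symm y) := by
    rw [hEΦ]
    exact hΦadd _ _
  rw [this, ← hEΦ, ← hEΦ]
  rw [happ, happ]
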